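/- Every element a_k b_ℓ c_{n−k−ℓ} of the triangle Δ^{(n)}{a,b,c} with ℓ ≥ 1 and n−k−ℓ ≥ 1 (interior together with interior of the b,c-string) can be uniquely written as the pointwise max of an element a_m b_{n−m} of STR^{(n)}{a,b} (0 ≤ m ≤ n−2) and an element a_{n−j} c_j of STR^{(n)}{a,c} (1 ≤ j ≤ n−1): namely a_{n−j} c_j + a_k b_{n−k} = a_k b_{n−k−j} c_j whenever k ≤ n−j−1. -/
import Mathlib


/-- The element `u_m v_{n-m}` of the string `STR^{(n)}{u,v}`. -/
def strMap (n : ℕ) (u v : Fin n) (m : ℕ) : Fin n → Fin n :=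
  fun i => if (i : ℕ) < m then u else v

/-- The element `a_k b_ℓ c_{n-k-ℓ}` of the triangle `Δ^{(n)}{a,b,c}`. -/
def triMap (n : ℕ) (a b c : Fin n) (k ℓ : ℕ) : Fin n → Fin n :=
  fun i => if (i : ℕ) < k then a else if (i : ℕ) < k + ℓ then b else c

/-- Every element `a_k b_ℓ c_j` of `Δ^{(n)}{a,b,c}` with `ℓ ≥ 1` and `j ≥ 1` is
the pointwise max `a_{n-j} c_j + a_k b_{n-k}`, and this representation (with
`0 ≤ m ≤ n-2`, `1 ≤ j' ≤ n-1`) is unique. -/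
theorem stmt13 (n : ℕ) (a b c : Fin n) (hab : a < b) (hbc : b < c)
    (k ℓ j : ℕ) (hsum : k + ℓ + j = n) (hℓ : 1 ≤ ℓ) (hj : 1 ≤ j) :
    ((fun i => max (strMap n a c (n - j) i) (strMap n a b k i)) = triMap n a b c k ℓ) ∧
    (∀ m j' : ℕ, m ≤ n - 2 → 1 ≤ j' → j' ≤ n - 1 →
      (fun i => max (strMap n a c (n - j') i) (strMap n a b m i)) = triMap n a b c k ℓ →
      m = k ∧ j' = j) := by
  constructor
  · funext i
    have hi := i.isLt
    have hnj : n - j = k + ℓ := by omega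
    simp only [strMap, triMap, hnj]
    split_ifs with h1 h2
    · simp
    · exact max_eq_right hab.le
    · omega
    · exact max_eq_left hbc.le
  · intro m j' hm hj'1 hj'2 h
    have key : ∀ x, x < n →
        max (if x < n - j' then a else c) (if x < m then a else b)
          = (if x < k then a else if x < k + ℓ then b else c) := by
      intro x hx
      have := congrFun h ⟨x, hx⟩
      simpa [strMap, triMap] using this
    have hjj : j' = j := by
      by_contra hne'
      rcases lt_or_gt_of_ne hne' with hlt | hgt
      · have e := key (n - j) (by omega)
        rw [if_pos (show n - j < n - j' by omega), if_neg (show ¬ n - j < k by omega),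
          if_neg (show ¬ n - j < k + ℓ by omega)] at e
        have hle : max a (if n - j < m then a else b) ≤ b := by
          apply max_le hab.le
          split_ifs
          · exact hab.le
          · exact le_rfl
        rw [e] at hle
        exact absurd hle hbc.not_ge
      · have e := key (n - j - 1) (by omega)
        rw [if_neg (show ¬ n - j - 1 < n - j' by omega), if_neg (show ¬ n - j - 1 < k by omega),
          if_pos (show n - j - 1 < k + ℓ by omega)] at e
        have hge : c ≤ max c (if n - j - 1 < m then a else b) := le_max_left _ _
        rw [e] at hge
        exact absurd hge hbc.not_ge
    subst hjj
    have hmk : m = k := by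
      have e1 := key k (by omega)
      rw [if_pos (show k < n - j' by omega), if_neg (show ¬ k < k by omega),
        if_pos (show k < k + ℓ by omega)] at e1
      have hmle : m ≤ k := by
        by_contra hgt
        rw [if_pos (show k < m by omega)] at e1
        simp at e1
        exact absurd e1 hab.ne
      rcases eq_or_lt_of_le hmle with heq | hlt
      · exact heq
      · have e2 := key m (by omega)
        rw [if_pos (show m < n - j' by omega), if_neg (show ¬ m < m by omega),
          if_pos (show m < k by omega)] at e2
        rw [max_eq_right hab.le] at e2
        exact absurd e2 hab.ne'
    exact ⟨hmk, rfl⟩
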